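/- For a string ω ∈ {0,1}^n with ω_1 = 0 and ω_n = 1, let S_k = Σ_{i=1}^k (1 - 2ω_i) be the associated ±1 walk. Then the stabilization time T(ω) (the minimal number of applications of E needed to reach a stable string) equals n/2 + max_{1 ≤ k ≤ n} S_k - S_n/2 - 1. -/
import Mathlib


open Finset

/-- The k-th bit of a string of length `n`, padded with `false` out of range. -/
def bit (n : ℕ) (ω : Fin n → Bool) (k : ℕ) : Bool :=
  if h : k < n then ω ⟨k, h⟩ else false

/-- One step of the evolution: every occurrence of "01" is replaced by "10"
(simultaneously).  `E(ω)_i = 1` iff `(ω_i = 1 ∧ ¬(i ≥ 2 ∧ ω_{i-1} = 0)) ∨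
(ω_i = 0 ∧ i < n ∧ ω_{i+1} = 1)` (1-indexed; here 0-indexed). -/
def evolve (n : ℕ) (ω : Fin n → Bool) : Fin n → Bool :=
  fun i =>
    (bit n ω i.val && !(decide (0 < i.val) && !bit n ω (i.val - 1)))
      || (!bit n ω i.val && bit n ω (i.val + 1))

/-- A string is stable iff it contains no occurrence of "01". -/
def IsStable (n : ℕ) (ω : Fin n → Bool) : Prop :=
  ∀ k : ℕ, ¬(bit n ω k = false ∧ bit n ω (k + 1) = true)

/-- The stabilization time: the least number of applications of `evolve`
after which the string is stable. -/
noncomputable def stabTime (n : ℕ) (ω : Fin n → Bool) : ℕ :=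
  sInf {m : ℕ | IsStable n ((evolve n)^[m] ω)}

/-- The ±1 walk associated with a string: `S_k = Σ_{i=1}^k (1 - 2 ω_i)`. -/
def walk (n : ℕ) (ω : Fin n → Bool) (k : ℕ) : ℤ :=
  ∑ i ∈ Finset.range k, (1 - 2 * (if bit n ω i then 1 else 0) : ℤ)

namespace Stab

def cnt (n : ℕ) (ω : Fin n → Bool) (t : ℕ) : ℕ :=
  ∑ i ∈ Finset.range t, (if bit n ω i then 1 else 0)

lemma bit_lt {n : ℕ} {ω : Fin n → Bool} {k : ℕ} (h : bit n ω k = true) : k < n := by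
  by_contra hk
  simp [bit, hk] at h

lemma bit_of_ge {n : ℕ} (ω : Fin n → Bool) {k : ℕ} (h : n ≤ k) : bit n ω k = false := by
  simp [bit, Nat.not_lt.mpr h]

lemma cnt_zero (n : ℕ) (ω : Fin n → Bool) : cnt n ω 0 = 0 := by simp [cnt]

lemma cnt_succ (n : ℕ) (ω : Fin n → Bool) (t : ℕ) :
    cnt n ω (t + 1) = cnt n ω t + (if bit n ω t then 1 else 0) := by
  unfold cnt; rw [Finset.sum_range_succ]

lemma cnt_le_self (n : ℕ) (ω : Fin n → Bool) (t : ℕ) : cnt n ω t ≤ t := by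
  induction t with
  | zero => simp [cnt]
  | succ t ih => rw [cnt_succ]; split <;> omega

lemma cnt_mono (n : ℕ) (ω : Fin n → Bool) {s t : ℕ} (h : s ≤ t) : cnt n ω s ≤ cnt n ω t := by
  induction t with
  | zero =>
    have : s = 0 := by omega
    simp [this]
  | succ t ih =>
    rcases Nat.lt_or_ge s (t+1) with h'|h'
    · have := ih (by omega); rw [cnt_succ]; split <;> omega
    · have hst : s = t + 1 := by omega
      simp [hst]

lemma cnt_of_ge (n : ℕ) (ω : Fin n → Bool) {t : ℕ} (h : n ≤ t) : cnt n ω t = cnt n ω n := by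
  induction t with
  | zero =>
    have hn0 : n = 0 := by omega
    simp [hn0]
  | succ t ih =>
    rcases Nat.lt_or_ge n (t+1) with h'|h'
    · rw [cnt_succ, ih (by omega), bit_of_ge _ (by omega)]; simp
    · have : n = t + 1 := by omega
      simp [this]

lemma exists_one_of_cnt_lt {n : ℕ} {ω : Fin n → Bool} {s t : ℕ} (h : cnt n ω s < cnt n ω t) :
    ∃ j, s ≤ j ∧ bit n ω j = true := by
  by_contra hc
  push_neg at hc
  have hconst : ∀ u, s ≤ u → cnt n ω u = cnt n ω s := by
    intro u hu
    induction u with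
    | zero =>
      have hs0 : s = 0 := by omega
      simp [hs0]
    | succ u ih =>
      rcases Nat.lt_or_ge s (u+1) with h'|h'
      · rw [cnt_succ, ih (by omega)]
        have hbu : bit n ω u = false := Bool.eq_false_iff.mpr (hc u (by omega))
        simp [hbu]
      · have : s = u + 1 := by omega
        simp [this]
  rcases Nat.lt_or_ge s t with h'|h'
  · rw [hconst t (by omega)] at h; omega
  · have := cnt_mono n ω h'; omega

lemma bit_evolve (n : ℕ) (ω : Fin n → Bool) (t : ℕ) :
    bit n (evolve n ω) t =
      ((bit n ω t && !(decide (0 < t) && !bit n ω (t - 1)))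
        || (!bit n ω t && bit n ω (t + 1))) := by
  by_cases h : t < n
  · have h' : bit n (evolve n ω) t = evolve n ω ⟨t, h⟩ := dif_pos h
    rw [h']
    rfl
  · have h1 : bit n (evolve n ω) t = false := bit_of_ge _ (by omega)
    have h2 : bit n ω t = false := bit_of_ge _ (by omega)
    have h3 : bit n ω (t+1) = false := bit_of_ge _ (by omega)
    simp [h1, h2, h3]

def swp (n : ℕ) (ω : Fin n → Bool) (t : ℕ) : ℕ :=
  if bit n ω t = false ∧ bit n ω (t + 1) = true then 1 else 0

lemma cnt_evolve (n : ℕ) (ω : Fin n → Bool) (t : ℕ) :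
    cnt n (evolve n ω) (t + 1) = cnt n ω (t + 1) + swp n ω t := by
  induction t with
  | zero =>
    rw [cnt_succ, cnt_succ, cnt_zero, cnt_zero, bit_evolve]
    unfold swp
    cases h0 : bit n ω 0 <;> cases h1 : bit n ω 1 <;> simp [h0, h1]
  | succ t ih =>
    rw [cnt_succ, ih, cnt_succ (t := t+1), bit_evolve]
    unfold swp
    have hd : decide (0 < t + 1) = true := by simp
    rw [hd]
    cases h0 : bit n ω t <;> cases h1 : bit n ω (t+1) <;> cases h2 : bit n ω (t+2) <;>
      simp [h0, h1, h2] <;> omega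

lemma cnt_evolve_n (n : ℕ) (ω : Fin n → Bool) :
    cnt n (evolve n ω) n = cnt n ω n := by
  cases n with
  | zero => simp [cnt_zero]
  | succ m =>
    rw [cnt_evolve]
    have hb : bit (m+1) ω (m + 1) = false := bit_of_ge _ (by omega)
    simp [swp, hb]

def W (n : ℕ) (ω : Fin n → Bool) : Finset ℕ :=
  (Finset.range n).filter (fun k => bit n ω k = false ∧ cnt n ω (k + 1) < cnt n ω n)

def D (n : ℕ) (ω : Fin n → Bool) (k : ℕ) : ℕ :=
  (k + 1) + cnt n ω n - 2 * cnt n ω (k + 1)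

lemma mem_W {n : ℕ} {ω : Fin n → Bool} {k : ℕ} :
    k ∈ W n ω ↔ k < n ∧ bit n ω k = false ∧ cnt n ω (k + 1) < cnt n ω n := by
  simp [W, and_assoc]

lemma mem_W_of (n : ℕ) (ω : Fin n → Bool) {k : ℕ} (hb : bit n ω k = false)
    (hc : cnt n ω (k + 1) < cnt n ω n) : k ∈ W n ω := by
  rw [mem_W]
  refine ⟨?_, hb, hc⟩
  by_contra h
  rw [cnt_of_ge n ω (by omega : n ≤ k + 1)] at hc
  omega

lemma mem_W_adj {n : ℕ} {ω : Fin n → Bool} {k : ℕ} (hb : bit n ω k = false)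
    (hb1 : bit n ω (k + 1) = true) : k ∈ W n ω := by
  apply mem_W_of n ω hb
  have h1 : k + 1 < n := bit_lt hb1
  have h2 : cnt n ω (k + 2) = cnt n ω (k+1) + 1 := by rw [cnt_succ, hb1]; rfl
  have h3 := cnt_mono n ω (show k + 2 ≤ n by omega)
  omega

lemma adj_of_pair {n : ℕ} {ω : Fin n → Bool} :
    ∀ d k, bit n ω k = false → bit n ω (k + d + 1) = true →
      ∃ m, bit n ω m = false ∧ bit n ω (m + 1) = true := by
  intro d
  induction d with
  | zero => intro k h0 h1; exact ⟨k, h0, h1⟩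
  | succ d ih =>
    intro k h0 h1
    cases hk1 : bit n ω (k + 1) with
    | true => exact ⟨k, h0, hk1⟩
    | false =>
      exact ih (k+1) hk1 (by rw [show k + 1 + d + 1 = k + (d+1) + 1 by ring]; exact h1)

lemma unstable_of_mem_W {n : ℕ} {ω : Fin n → Bool} {k : ℕ} (h : k ∈ W n ω) :
    ¬ IsStable n ω := by
  rw [mem_W] at h
  obtain ⟨hk, hb, hc⟩ := h
  obtain ⟨j, hj, hbj⟩ := exists_one_of_cnt_lt hc
  intro hs
  obtain ⟨m, hm0, hm1⟩ := adj_of_pair (j - (k+1)) k hb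
    (by rw [show k + (j - (k+1)) + 1 = j by omega]; exact hbj)
  exact hs m ⟨hm0, hm1⟩

lemma W_nonempty_of_unstable {n : ℕ} {ω : Fin n → Bool} (h : ¬ IsStable n ω) :
    (W n ω).Nonempty := by
  rw [IsStable] at h
  push_neg at h
  obtain ⟨k, h0, h1⟩ := h
  exact ⟨k, mem_W_adj h0 h1⟩

lemma two_le_D {n : ℕ} {ω : Fin n → Bool} {k : ℕ} (h : k ∈ W n ω) : 2 ≤ D n ω k := by
  rw [mem_W] at h
  obtain ⟨hk, hb, hc⟩ := h
  have h1 : cnt n ω (k + 1) = cnt n ω k := by rw [cnt_succ, hb]; rfl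
  have h2 := cnt_le_self n ω k
  unfold D
  omega

lemma walk_succ (n : ℕ) (ω : Fin n → Bool) (t : ℕ) :
    walk n ω (t + 1) = walk n ω t + (1 - 2 * (if bit n ω t then 1 else 0)) := by
  unfold walk; rw [Finset.sum_range_succ]

lemma walk_eq (n : ℕ) (ω : Fin n → Bool) (t : ℕ) :
    walk n ω t = (t : ℤ) - 2 * cnt n ω t := by
  induction t with
  | zero => simp [walk, cnt]
  | succ t ih =>
    rw [walk_succ, ih, cnt_succ]
    push_cast
    split_ifs <;> ring

lemma D_eq {n : ℕ} {ω : Fin n → Bool} (k : ℕ) (h : cnt n ω (k+1) ≤ k + 1)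
    (h2 : cnt n ω (k+1) ≤ cnt n ω n) :
    (D n ω k : ℤ) = walk n ω (k + 1) + cnt n ω n := by
  rw [walk_eq]
  unfold D
  push_cast [Nat.cast_sub (by omega : 2 * cnt n ω (k+1) ≤ (k+1) + cnt n ω n)]
  ring

lemma D_succ_le_sup {n : ℕ} {ω : Fin n → Bool} {k : ℕ} (hk : k ∈ W n (evolve n ω)) :
    D n (evolve n ω) k + 1 ≤ (W n ω).sup (D n ω) := by
  rw [mem_W] at hk
  obtain ⟨hkn, hbE, hcE⟩ := hk
  have hEn := cnt_evolve_n n ω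
  have hEk := cnt_evolve n ω k
  rw [bit_evolve] at hbE
  cases hb : bit n ω k with
  | false =>
    rw [hb] at hbE
    simp only [Bool.false_and, Bool.not_false, Bool.true_and, Bool.false_or] at hbE
    -- hbE : bit n ω (k+1) = false
    have hswp : swp n ω k = 0 := by simp [swp, hbE]
    have hck : cnt n (evolve n ω) (k+1) = cnt n ω (k+1) := by omega
    have hc : cnt n ω (k + 1) < cnt n ω n := by omega
    have hc2 : cnt n ω (k + 1 + 1) = cnt n ω (k+1) := by rw [cnt_succ, hbE]; rfl
    have hbnd := cnt_le_self n ω (k+1)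
    have hmem : (k+1) ∈ W n ω := mem_W_of n ω hbE (by omega)
    have hle := Finset.le_sup (f := D n ω) hmem
    have : D n (evolve n ω) k + 1 ≤ D n ω (k+1) := by unfold D; omega
    omega
  | true =>
    rw [hb] at hbE
    cases k with
    | zero => simp at hbE
    | succ m =>
      simp only [Nat.add_sub_cancel, decide_eq_true_eq] at hbE
      simp at hbE
      -- hbE : bit n ω m = false
      have hswp : swp n ω (m+1) = 0 := by simp [swp, hb]
      have hck : cnt n (evolve n ω) (m+1+1) = cnt n ω (m+1+1) := by omega
      have hc : cnt n ω (m+1+1) < cnt n ω n := by omega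
      have hc2 : cnt n ω (m+1+1) = cnt n ω (m+1) + 1 := by rw [cnt_succ, hb]; rfl
      have hbnd := cnt_le_self n ω (m+1)
      have hmem : m ∈ W n ω := mem_W_of n ω hbE (by omega)
      have hle := Finset.le_sup (f := D n ω) hmem
      have hb1 : cnt n ω (m+1) ≤ m + 1 := cnt_le_self n ω (m+1)
      have : D n (evolve n ω) (m+1) + 1 ≤ D n ω m := by
        unfold D; omega
      omega

lemma exists_zero {n : ℕ} {ω : Fin n → Bool} {t : ℕ} (h : cnt n ω t < t) :
    ∃ q, q < t ∧ bit n ω q = false := by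
  induction t with
  | zero => omega
  | succ t ih =>
    cases hb : bit n ω t with
    | false => exact ⟨t, by omega, hb⟩
    | true =>
      rw [cnt_succ, hb] at h
      obtain ⟨q, hq, hqz⟩ := ih (by simpa using h)
      exact ⟨q, by omega, hqz⟩

lemma greatest_zero {n : ℕ} {ω : Fin n → Bool} :
    ∀ m, (∃ q, q ≤ m ∧ bit n ω q = false) →
      ∃ q, q ≤ m ∧ bit n ω q = false ∧ ∀ r, q < r → r ≤ m → bit n ω r = true := by
  intro m
  induction m with
  | zero =>
    rintro ⟨q, hq, hqz⟩
    exact ⟨q, hq, hqz, fun r h1 h2 => by omega⟩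
  | succ m ih =>
    rintro ⟨q, hq, hqz⟩
    cases hb : bit n ω (m+1) with
    | false => exact ⟨m+1, le_refl _, hb, fun r h1 h2 => by omega⟩
    | true =>
      have hq' : q ≤ m := by
        rcases Nat.lt_or_ge q (m+1) with h'|h'
        · omega
        · exfalso; have : q = m + 1 := by omega
          rw [this] at hqz; rw [hqz] at hb; exact Bool.false_ne_true hb
      obtain ⟨q', h1, h2, h3⟩ := ih ⟨q, hq', hqz⟩
      refine ⟨q', by omega, h2, fun r hr1 hr2 => ?_⟩
      rcases Nat.lt_or_ge r (m+1) with h'|h'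
      · exact h3 r hr1 (by omega)
      · have : r = m + 1 := by omega
        rw [this]; exact hb

lemma cnt_stretch {n : ℕ} {ω : Fin n → Bool} {q : ℕ} :
    ∀ m, q ≤ m → (∀ r, q < r → r ≤ m → bit n ω r = true) →
      cnt n ω (m + 1) + q = cnt n ω (q + 1) + m := by
  intro m
  induction m with
  | zero =>
    intro h _
    have hq0 : q = 0 := by omega
    subst hq0; rfl
  | succ m ih =>
    intro hqm hstr
    rcases Nat.lt_or_ge q (m+1) with h'|h'
    · have hrec := ih (by omega) (fun r h1 h2 => hstr r h1 (by omega))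
      have hb : bit n ω (m+1) = true := hstr (m+1) (by omega) (le_refl _)
      rw [cnt_succ (t := m+1), hb]
      simp only [if_true]
      omega
    · have : q = m + 1 := by omega
      subst this; rfl

lemma exists_D_ge {n : ℕ} {ω : Fin n → Bool} (hW : (W n ω).Nonempty)
    (h3 : 3 ≤ (W n ω).sup (D n ω)) :
    ∃ k', k' ∈ W n (evolve n ω) ∧
      (W n ω).sup (D n ω) ≤ D n (evolve n ω) k' + 1 := by
  obtain ⟨k, hkW, hsup⟩ := Finset.exists_mem_eq_sup (W n ω) hW (D n ω)
  rw [mem_W] at hkW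
  obtain ⟨hkn, hb0, hc⟩ := hkW
  have hEn := cnt_evolve_n n ω
  have hck0 : cnt n ω (k + 1) = cnt n ω k := by rw [cnt_succ, hb0]; rfl
  have hkle := cnt_le_self n ω k
  have hb1 : bit n ω (k + 1) = true := by
    by_contra h
    rw [Bool.not_eq_true] at h
    have hc2 : cnt n ω (k + 1 + 1) = cnt n ω (k + 1) := by rw [cnt_succ, h]; rfl
    have hmem : k + 1 ∈ W n ω := mem_W_of n ω h (by omega)
    have hle := Finset.le_sup (f := D n ω) hmem
    have hDk : D n ω (k + 1) = D n ω k + 1 := by unfold D; omega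
    omega
  have hck1 : cnt n ω (k + 1 + 1) = cnt n ω (k + 1) + 1 := by
    rw [cnt_succ (t := k+1), hb1]; rfl
  have hkn1 : k + 1 < n := bit_lt hb1
  by_cases hA : cnt n ω (k + 1 + 1) < cnt n ω n
  · -- there is another one after k+1
    have hbE : bit n (evolve n ω) (k + 1) = false := by
      rw [bit_evolve]
      simp [hb0, hb1]
    have hsw : swp n ω (k + 1) = 0 := by simp [swp, hb1]
    have hcE : cnt n (evolve n ω) (k + 1 + 1) = cnt n ω (k + 1 + 1) := by
      rw [cnt_evolve]; omega
    refine ⟨k + 1, mem_W_of n (evolve n ω) hbE (by omega), ?_⟩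
    rw [hsup]
    unfold D
    omega
  · -- the one at k+1 is the last one
    have hB : cnt n ω (k + 1 + 1) = cnt n ω n := by
      have := cnt_mono n ω (show k + 1 + 1 ≤ n by omega)
      omega
    have hDk : D n ω k + cnt n ω n = k + 3 := by unfold D; omega
    have hcnt_le : cnt n ω n ≤ k := by omega
    have hcn1 : 1 ≤ cnt n ω n := by omega
    obtain ⟨m, rfl⟩ : ∃ m, k = m + 1 := ⟨k - 1, by omega⟩
    cases hbm : bit n ω m with
    | false =>
      have hbE : bit n (evolve n ω) m = false := by
        rw [bit_evolve]
        simp [hbm, hb0]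
      have hsw : swp n ω m = 0 := by simp [swp, hb0]
      have hcE : cnt n (evolve n ω) (m + 1) = cnt n ω (m + 1) := by
        rw [cnt_evolve]; omega
      refine ⟨m, mem_W_of n (evolve n ω) hbE (by omega), ?_⟩
      rw [hsup]
      unfold D
      omega
    | true =>
      have hcm : cnt n ω (m + 1) = cnt n ω m + 1 := by rw [cnt_succ, hbm]; rfl
      cases m with
      | zero =>
        exfalso
        have h1 : cnt n ω 1 = cnt n ω 0 + 1 := hcm
        rw [cnt_zero] at h1
        omega
      | succ p =>
        cases hbp : bit n ω p with
        | false =>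
          have hbE : bit n (evolve n ω) (p + 1) = false := by
            rw [bit_evolve]
            simp [hbm, hbp]
          have hsw : swp n ω (p + 1) = 0 := by simp [swp, hbm]
          have hcE : cnt n (evolve n ω) (p + 1 + 1) = cnt n ω (p + 1 + 1) := by
            rw [cnt_evolve]; omega
          refine ⟨p + 1, mem_W_of n (evolve n ω) hbE (by omega), ?_⟩
          rw [hsup]
          unfold D
          omega
        | true =>
          exfalso
          have hzex : ∃ q, q ≤ p + 1 ∧ bit n ω q = false := by
            obtain ⟨q, hq1, hq2⟩ := exists_zero (show cnt n ω (p + 1 + 1) < p + 1 + 1 by omega)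
            exact ⟨q, by omega, hq2⟩
          obtain ⟨q, hq1, hq2, hq3⟩ := greatest_zero (p + 1) hzex
          have hqp : q + 2 ≤ p + 1 := by
            have h1 : q ≠ p + 1 := by
              intro h; rw [h, hbm] at hq2; exact absurd hq2 (by simp)
            have h2 : q ≠ p := by
              intro h; rw [h, hbp] at hq2; exact absurd hq2 (by simp)
            omega
          have hstr := cnt_stretch (p + 1) (by omega) hq3
          have hqc : cnt n ω (q + 1) = cnt n ω q := by rw [cnt_succ, hq2]; rfl
          have hqle2 := cnt_le_self n ω q
          have hqmem : q ∈ W n ω := mem_W_of n ω hq2 (by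
            have := cnt_mono n ω (show q + 1 ≤ p + 1 + 1 by omega)
            omega)
          have hqle := Finset.le_sup (f := D n ω) hqmem
          rw [hsup] at hqle
          have hDq : D n ω q + 2 * cnt n ω (q + 1) = q + 1 + cnt n ω n := by
            unfold D
            have := cnt_mono n ω (show q + 1 ≤ p + 1 + 1 by omega)
            omega
          omega

def Phi (n : ℕ) (ω : Fin n → Bool) : ℕ := (W n ω).sup (D n ω) - 1

lemma two_le_sup {n : ℕ} {ω : Fin n → Bool} (hW : (W n ω).Nonempty) :
    2 ≤ (W n ω).sup (D n ω) := by
  obtain ⟨k, hk⟩ := hW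
  exact le_trans (two_le_D hk) (Finset.le_sup hk)

lemma sup_evolve {n : ℕ} {ω : Fin n → Bool} (hW : (W n ω).Nonempty)
    (h3 : 3 ≤ (W n ω).sup (D n ω)) :
    (W n (evolve n ω)).Nonempty ∧
      (W n (evolve n ω)).sup (D n (evolve n ω)) + 1 = (W n ω).sup (D n ω) := by
  obtain ⟨k', hk', hge⟩ := exists_D_ge hW h3
  refine ⟨⟨k', hk'⟩, le_antisymm ?_ ?_⟩
  · have h1 : (W n (evolve n ω)).sup (D n (evolve n ω)) ≤ (W n ω).sup (D n ω) - 1 := by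
      apply Finset.sup_le
      intro j hj
      have := D_succ_le_sup hj
      omega
    omega
  · exact le_trans hge (by have := Finset.le_sup (f := D n (evolve n ω)) hk'; omega)

lemma phi_stable {n : ℕ} {ω : Fin n → Bool} :
    ∀ c, Phi n ω = c → IsStable n ((evolve n)^[c] ω) := by
  intro c
  induction c using Nat.strong_induction_on generalizing ω with
  | _ c ih =>
    intro hc
    rcases Finset.eq_empty_or_nonempty (W n ω) with hW | hW
    · have hc0 : c = 0 := by
        rw [← hc]; unfold Phi; rw [hW]; simp
      subst hc0
      simp only [Function.iterate_zero, id_eq]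
      intro k hk
      exact absurd (mem_W_adj hk.1 hk.2) (by rw [hW]; simp)
    · have h2 := two_le_sup hW
      rcases Nat.lt_or_ge ((W n ω).sup (D n ω)) 3 with hlt | hge
      · -- sup = 2, c = 1, evolve is stable
        have hc1 : c = 1 := by unfold Phi at hc; omega
        subst hc1
        rw [Function.iterate_one]
        intro k hk
        have hmem := mem_W_adj hk.1 hk.2
        have := D_succ_le_sup hmem
        have := two_le_D hmem
        omega
      · obtain ⟨hW', hsup'⟩ := sup_evolve hW hge
        have hc1 : 1 ≤ c := by unfold Phi at hc; omega
        obtain ⟨c', rfl⟩ : ∃ c', c = c' + 1 := ⟨c - 1, by omega⟩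
        rw [Function.iterate_succ_apply]
        apply ih c' (by omega)
        unfold Phi at hc ⊢
        omega

lemma phi_unstable {n : ℕ} {ω : Fin n → Bool} :
    ∀ m, m < Phi n ω → ¬ IsStable n ((evolve n)^[m] ω) := by
  intro m
  induction m generalizing ω with
  | zero =>
    intro hm
    have hW : (W n ω).Nonempty := by
      rcases Finset.eq_empty_or_nonempty (W n ω) with hW | hW
      · exfalso; unfold Phi at hm; rw [hW] at hm; simp at hm
      · exact hW
    obtain ⟨k, hk⟩ := hW
    simp only [Function.iterate_zero, id_eq]
    exact unstable_of_mem_W hk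
  | succ m ih =>
    intro hm
    have hW : (W n ω).Nonempty := by
      rcases Finset.eq_empty_or_nonempty (W n ω) with hW | hW
      · exfalso; unfold Phi at hm; rw [hW] at hm; simp at hm
      · exact hW
    have hge : 3 ≤ (W n ω).sup (D n ω) := by unfold Phi at hm; omega
    obtain ⟨hW', hsup'⟩ := sup_evolve hW hge
    rw [Function.iterate_succ_apply]
    apply ih
    unfold Phi at hm ⊢
    omega

lemma stabTime_eq_phi (n : ℕ) (ω : Fin n → Bool) : stabTime n ω = Phi n ω := by
  have hmem : Phi n ω ∈ {m : ℕ | IsStable n ((evolve n)^[m] ω)} := phi_stable _ rfl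
  apply le_antisymm
  · exact Nat.sInf_le hmem
  · by_contra h
    push_neg at h
    have hne : {m : ℕ | IsStable n ((evolve n)^[m] ω)}.Nonempty := ⟨_, hmem⟩
    have := Nat.sInf_mem hne
    exact phi_unstable _ h this

end Stab

open Stab in
theorem stmt2 (n : ℕ) (hn : 0 < n) (ω : Fin n → Bool)
    (h0 : ω ⟨0, hn⟩ = false) (h1 : ω ⟨n - 1, Nat.sub_lt hn one_pos⟩ = true) :
    (stabTime n ω : ℚ) =
      (n : ℚ) / 2
        + (((Finset.Icc 1 n).sup' (Finset.nonempty_Icc.mpr hn) (walk n ω) : ℤ) : ℚ)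
        - ((walk n ω n : ℤ) : ℚ) / 2 - 1 := by
  rcases Nat.lt_or_ge n 2 with h2 | h2
  · exfalso
    have hn1 : n = 1 := by omega
    subst hn1
    have h1' : ω ⟨0, hn⟩ = true := h1
    rw [h0] at h1'
    exact absurd h1' (by simp)
  have hb0 : bit n ω 0 = false := by
    rw [bit, dif_pos hn]; exact h0
  have hbn1 : bit n ω (n - 1) = true := by
    rw [bit, dif_pos (Nat.sub_lt hn one_pos)]; exact h1
  have hcn : cnt n ω (n - 1) + 1 = cnt n ω n := by
    have h := cnt_succ n ω (n - 1)
    rw [hbn1] at h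
    rw [show n - 1 + 1 = n by omega] at h
    simp at h
    omega
  have hc1 : cnt n ω 1 = 0 := by
    have h := cnt_succ n ω 0
    rw [hb0, cnt_zero] at h
    simpa using h
  have hc1n : cnt n ω 1 < cnt n ω n := by
    have := cnt_mono n ω (show 1 ≤ n - 1 by omega)
    omega
  have hWne : (W n ω).Nonempty := ⟨0, mem_W_of n ω hb0 (by rw [show (0:ℕ)+1 = 1 from rfl]; omega)⟩
  set M : ℤ := ((Finset.Icc 1 n).sup' (Finset.nonempty_Icc.mpr hn) (walk n ω)) with hM
  -- upper bound : sup D ≤ M + cnt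
  obtain ⟨k0, hk0, hsup0⟩ := Finset.exists_mem_eq_sup (W n ω) hWne (D n ω)
  have hk0' := hk0
  rw [mem_W] at hk0'
  obtain ⟨hk0n, hk0b, hk0c⟩ := hk0'
  have hDk0 : (D n ω k0 : ℤ) = walk n ω (k0 + 1) + cnt n ω n :=
    D_eq k0 (cnt_le_self n ω (k0 + 1)) (by omega)
  have hwk0 : walk n ω (k0 + 1) ≤ M := by
    apply Finset.le_sup'
    simp only [Finset.mem_Icc]
    omega
  have hupper : (((W n ω).sup (D n ω) : ℕ) : ℤ) ≤ M + cnt n ω n := by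
    rw [hsup0, hDk0]; omega
  -- lower bound: find maximizing t
  have hAne : ((Finset.Icc 1 n).filter (fun t => walk n ω t = M)).Nonempty := by
    obtain ⟨t0, ht0, hMt⟩ := Finset.exists_mem_eq_sup' (Finset.nonempty_Icc.mpr hn) (walk n ω)
    exact ⟨t0, Finset.mem_filter.mpr ⟨ht0, hMt.symm⟩⟩
  set t := ((Finset.Icc 1 n).filter (fun t => walk n ω t = M)).max' hAne with ht_def
  have htA := ((Finset.Icc 1 n).filter (fun t => walk n ω t = M)).max'_mem hAne
  rw [Finset.mem_filter, Finset.mem_Icc] at htA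
  obtain ⟨⟨ht1, htn⟩, htM⟩ := htA
  have hbt : bit n ω (t - 1) = false := by
    rcases Nat.lt_or_ge t 2 with h' | h'
    · have : t = 1 := by omega
      rw [this]; exact hb0
    · by_contra hbt
      rw [Bool.not_eq_false] at hbt
      have hws := walk_succ n ω (t - 1)
      rw [hbt] at hws
      rw [show t - 1 + 1 = t by omega] at hws
      simp at hws
      have hmem : t - 1 ∈ Finset.Icc 1 n := by simp only [Finset.mem_Icc]; omega
      have hle : walk n ω (t - 1) ≤ M := Finset.le_sup' _ hmem
      rw [htM] at hws
      omega
  have htltn : t < n := by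
    by_contra h'
    have : t = n := by omega
    rw [this] at hbt
    rw [hbt] at hbn1
    exact absurd hbn1 (by simp)
  have hctn : cnt n ω t < cnt n ω n := by
    have := cnt_mono n ω (show t ≤ n - 1 by omega)
    omega
  have hct1 : cnt n ω (t - 1 + 1) = cnt n ω t := by rw [show t - 1 + 1 = t by omega]
  have htW : t - 1 ∈ W n ω := mem_W_of n ω hbt (by omega)
  have hDt : (D n ω (t - 1) : ℤ) = walk n ω t + cnt n ω n := by
    have hh := D_eq (t - 1) (cnt_le_self n ω (t - 1 + 1)) (by omega)
    rw [show t - 1 + 1 = t by omega] at hh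
    exact hh
  have hlow := Finset.le_sup (f := D n ω) htW
  have hlower : M + cnt n ω n ≤ (((W n ω).sup (D n ω) : ℕ) : ℤ) := by
    rw [← htM, ← hDt]
    exact_mod_cast hlow
  have hsupeq : (((W n ω).sup (D n ω) : ℕ) : ℤ) = M + cnt n ω n := le_antisymm hupper hlower
  -- conclude
  have hsup2 := two_le_sup hWne
  have hst : (stabTime n ω : ℤ) = M + cnt n ω n - 1 := by
    rw [stabTime_eq_phi]
    unfold Phi
    rw [← hsupeq]
    omega
  have hwn : walk n ω n = (n : ℤ) - 2 * cnt n ω n := walk_eq n ω n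
  have hstQ : (stabTime n ω : ℚ) = (M : ℚ) + (cnt n ω n : ℚ) - 1 := by
    exact_mod_cast congrArg (fun z : ℤ => (z : ℚ)) hst
  rw [hstQ, hwn]
  push_cast
  ring
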